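/- For every n ≥ 0 and every ballot path p of length n, there exists exactly one ballot path p′ of length n such that p′ contains no occurrence of the factor DD and p′ is UD-equivalent to p. -/

import Mathlib

/-- A path is a list of steps: `true` is an up-step U, `false` is a down-step D. -/
abbrev Step := Bool

/-- The height of the `j`-th lattice point of the path `p`. -/
def pathHeight (p : List Bool) (j : ℕ) : ℤ :=
  ((p.take j).count true : ℤ) - ((p.take j).count false : ℤ)

/-- A ballot path: every prefix has at least as many U's as D's. -/
def IsBallot (p : List Bool) : Prop :=
  ∀ k : ℕ, (p.take k).count false ≤ (p.take k).count true

/-- A Dyck path: a ballot path with equally many U's and D's. -/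
def IsDyck (p : List Bool) : Prop :=
  IsBallot p ∧ p.count true = p.count false

/-- The string `τ` occurs at (0-indexed) position `i` of the path `p`. -/
def OccursAt (τ p : List Bool) (i : ℕ) : Prop :=
  (p.drop i).take τ.length = τ

/-- Two paths are `τ`-equivalent: same length and occurrences of `τ` at the same positions. -/
def PathEquiv (τ p q : List Bool) : Prop :=
  p.length = q.length ∧ ∀ i : ℕ, OccursAt τ p i ↔ OccursAt τ q i

/-- The setoid of `τ`-equivalence on ballot paths of length `n`. -/
def ballotSetoid (τ : List Bool) (n : ℕ) :
    Setoid {p : List Bool // IsBallot p ∧ p.length = n} where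
  r p q := PathEquiv τ p.1 q.1
  iseqv := ⟨fun _ => ⟨rfl, fun _ => Iff.rfl⟩,
            fun h => ⟨h.1.symm, fun i => (h.2 i).symm⟩,
            fun h1 h2 => ⟨h1.1.trans h2.1, fun i => (h1.2 i).trans (h2.2 i)⟩⟩

/-- The number of `τ`-equivalence classes of ballot paths of length `n`. -/
noncomputable def numBallotClasses (τ : List Bool) (n : ℕ) : ℕ :=
  Nat.card (Quotient (ballotSetoid τ n))

/-- The setoid of `τ`-equivalence on Dyck paths of semilength `n`. -/
def dyckSetoid (τ : List Bool) (n : ℕ) :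
    Setoid {p : List Bool // IsDyck p ∧ p.length = 2 * n} where
  r p q := PathEquiv τ p.1 q.1
  iseqv := ⟨fun _ => ⟨rfl, fun _ => Iff.rfl⟩,
            fun h => ⟨h.1.symm, fun i => (h.2 i).symm⟩,
            fun h1 h2 => ⟨h1.1.trans h2.1, fun i => (h1.2 i).trans (h2.2 i)⟩⟩

/-- The number of `τ`-equivalence classes of Dyck paths of semilength `n`. -/
noncomputable def numDyckClasses (τ : List Bool) (n : ℕ) : ℕ :=
  Nat.card (Quotient (dyckSetoid τ n))


def ddFree (p : List Bool) (j : ℕ) : Bool :=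
  if 1 ≤ j ∧ p[j-1]? = some true ∧ p[j]? = some false then false else true

def ddNorm (p : List Bool) (n : ℕ) : List Bool := List.ofFn (fun j : Fin n => ddFree p j)

lemma ddNorm_length (p : List Bool) (n : ℕ) : (ddNorm p n).length = n := by
  simp [ddNorm]

lemma ddNorm_getElem? (p : List Bool) (n j : ℕ) (hj : j < n) :
    (ddNorm p n)[j]? = some (ddFree p j) := by
  simp [ddNorm, List.getElem?_ofFn, List.ofFnNthVal, hj]

lemma ddFree_eq_false_iff (p : List Bool) (j : ℕ) :
    ddFree p j = false ↔ (1 ≤ j ∧ p[j-1]? = some true ∧ p[j]? = some false) := by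
  unfold ddFree
  split <;> simp_all

lemma occUD_iff (p : List Bool) (i : ℕ) :
    OccursAt [true, false] p i ↔ p[i]? = some true ∧ p[i+1]? = some false := by
  unfold OccursAt
  constructor
  · intro h
    have h0 := congrArg (fun l => l[0]?) h
    have h1 := congrArg (fun l => l[1]?) h
    simp [List.getElem?_take, List.getElem?_drop] at h0 h1
    exact ⟨h0, h1⟩
  · rintro ⟨h0, h1⟩
    have hi1 : i + 1 < p.length := (List.getElem?_eq_some_iff.mp h1).1
    have hi : i < p.length := by omega
    have e0 : p[i] = true := by
      have := List.getElem?_eq_getElem hi; rw [h0] at this; exact (Option.some.inj this).symm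
    have e1 : p[i+1] = false := by
      have := List.getElem?_eq_getElem hi1; rw [h1] at this; exact (Option.some.inj this).symm
    rw [List.drop_eq_getElem_cons hi, List.drop_eq_getElem_cons hi1, e0, e1]
    simp

lemma infixDD_iff (p : List Bool) :
    [false, false] <:+: p ↔ ∃ i, p[i]? = some false ∧ p[i+1]? = some false := by
  constructor
  · rintro ⟨s, t, h⟩
    rw [List.append_assoc] at h
    refine ⟨s.length, ?_, ?_⟩ <;> rw [← h]
    · rw [List.getElem?_append_right (le_refl _)]; simp
    · rw [List.getElem?_append_right (by omega)]
      have : s.length + 1 - s.length = 1 := by omega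
      rw [this]; simp
  · rintro ⟨i, h0, h1⟩
    have hi1 : i + 1 < p.length := (List.getElem?_eq_some_iff.mp h1).1
    have hi : i < p.length := by omega
    have e0 : p[i] = false := by
      have := List.getElem?_eq_getElem hi; rw [h0] at this; exact (Option.some.inj this).symm
    have e1 : p[i+1] = false := by
      have := List.getElem?_eq_getElem hi1; rw [h1] at this; exact (Option.some.inj this).symm
    refine ⟨p.take i, p.drop (i+2), ?_⟩
    have hd : p.drop i = false :: false :: p.drop (i+2) := by
      rw [List.drop_eq_getElem_cons hi, List.drop_eq_getElem_cons hi1, e0, e1]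
    calc p.take i ++ [false, false] ++ p.drop (i+2)
        = p.take i ++ p.drop i := by rw [hd]; simp
      _ = p := List.take_append_drop i p

lemma count_true_add_count_false (l : List Bool) : l.count true + l.count false = l.length := by
  induction l with
  | nil => simp
  | cons a l ih => cases a <;> simp [List.count_cons] <;> omega

lemma count_false_take_le (l m : List Bool) (hlen : l.length = m.length)
    (h : ∀ j : ℕ, l[j]? = some false → m[j]? = some false) :
    ∀ k, (l.take k).count false ≤ (m.take k).count false := by
  induction l generalizing m with
  | nil => simp
  | cons a l ih =>
    cases m with
    | nil => simp at hlen
    | cons b m =>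
      intro k
      cases k with
      | zero => simp
      | succ k =>
        simp only [List.take_succ_cons, List.count_cons]
        have hab : a = false → b = false := by
          intro ha
          have := h 0 (by simp [ha])
          simpa using this
        have h' : ∀ j : ℕ, l[j]? = some false → m[j]? = some false := by
          intro j hj
          have h1 : (a :: l)[j+1]? = some false := by
            rw [List.getElem?_cons_succ]; exact hj
          have := h (j+1) h1
          rwa [List.getElem?_cons_succ] at this
        have hrec := ih m (by simpa using hlen) h' k
        cases a <;> cases b
        · simp only [beq_self_eq_true, beq_iff_eq, if_true]; simp; omega
        · exact absurd (hab rfl) (by simp)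
        · simp only [beq_self_eq_true, beq_iff_eq, if_true]; simp; omega
        · simp only [beq_self_eq_true, beq_iff_eq, if_true]; simp; omega

/-- every ballot path of length `n` is UD-equivalent to a unique
ballot path of length `n` avoiding the factor DD. -/
theorem ud_unique_representative (n : ℕ) (p : List Bool)
    (hp : IsBallot p) (hlen : p.length = n) :
    ∃! p' : List Bool, IsBallot p' ∧ p'.length = n ∧
      ¬ [false, false] <:+: p' ∧ PathEquiv [true, false] p p' := by
  set q := ddNorm p n with hq
  have hqlen : q.length = n := ddNorm_length p n
  -- pointwise: q is false at j iff UD occurs in p at j-1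
  have hqfalse : ∀ j : ℕ, q[j]? = some false ↔
      (j < n ∧ 1 ≤ j ∧ p[j-1]? = some true ∧ p[j]? = some false) := by
    intro j
    constructor
    · intro h
      have hj : j < n := by
        by_contra hc
        rw [List.getElem?_eq_none (by omega)] at h
        cases h
      rw [ddNorm_getElem? p n j hj] at h
      exact ⟨hj, (ddFree_eq_false_iff p j).mp (Option.some.inj h)⟩
    · rintro ⟨hj, hcond⟩
      rw [ddNorm_getElem? p n j hj, (ddFree_eq_false_iff p j).mpr hcond]
  have hqtrue : ∀ j : ℕ, j < n → q[j]? = some false ∨ q[j]? = some true := by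
    intro j hj
    rw [ddNorm_getElem? p n j hj]
    cases hb : ddFree p j
    · left; rfl
    · right; rfl
  -- q is false at j implies p is false at j
  have hfp : ∀ j : ℕ, q[j]? = some false → p[j]? = some false := by
    intro j hj
    exact ((hqfalse j).mp hj).2.2.2
  -- q is a ballot path
  have hqB : IsBallot q := by
    intro k
    have h1 : (q.take k).count false ≤ (p.take k).count false :=
      count_false_take_le q p (by omega) hfp k
    have h2 := hp k
    have h3 := count_true_add_count_false (q.take k)
    have h4 := count_true_add_count_false (p.take k)
    have h5 : (q.take k).length = (p.take k).length := by
      simp [List.length_take]; omega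
    omega
  -- q avoids DD
  have hqDD : ¬ [false, false] <:+: q := by
    rw [infixDD_iff]
    rintro ⟨i, h0, h1⟩
    have c0 := (hqfalse i).mp h0
    have c1 := (hqfalse (i+1)).mp h1
    have e1 : p[i]? = some true := by simpa using c1.2.2.1
    rw [c0.2.2.2] at e1
    exact Bool.noConfusion (Option.some.inj e1)
  -- q is UD-equivalent to p
  have hqE : PathEquiv [true, false] p q := by
    refine ⟨by omega, fun i => ?_⟩
    rw [occUD_iff, occUD_iff]
    constructor
    · rintro ⟨h0, h1⟩
      have hi1 : i + 1 < n := by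
        have := (List.getElem?_eq_some_iff.mp h1).1; omega
      constructor
      · rcases hqtrue i (by omega) with hf | ht
        · have := ((hqfalse i).mp hf).2.2.2
          rw [h0] at this
          exact Bool.noConfusion (Option.some.inj this)
        · exact ht
      · exact (hqfalse (i+1)).mpr ⟨hi1, by omega, by simpa using h0, h1⟩
    · rintro ⟨h0, h1⟩
      have c1 := (hqfalse (i+1)).mp h1
      exact ⟨by simpa using c1.2.2.1, c1.2.2.2⟩
  refine ⟨q, ⟨hqB, hqlen, hqDD, hqE⟩, ?_⟩
  -- uniqueness
  rintro r ⟨hrB, hrlen, hrDD, hrE⟩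
  apply List.ext_getElem?
  intro j
  rcases Nat.lt_or_ge j n with hj | hj
  · -- both positions defined; compare values
    have hrj : j < r.length := by omega
    have hqj : j < q.length := by omega
    rw [List.getElem?_eq_getElem hrj, List.getElem?_eq_getElem hqj]
    -- characterize r[j] = false
    have hrchar : r[j] = false ↔ (1 ≤ j ∧ OccursAt [true, false] r (j-1)) := by
      constructor
      · intro hf
        have hj1 : 1 ≤ j := by
          by_contra hc
          have hj0 : j = 0 := by omega
          have := hrB 1
          subst hj0
          rw [List.take_one] at this
          cases r with
          | nil => simp at hrj
          | cons a r' =>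
            simp at hf this ⊢
            simp [hf] at this
        refine ⟨hj1, ?_⟩
        rw [occUD_iff]
        have hjj : j - 1 + 1 = j := by omega
        rw [hjj]
        refine ⟨?_, by rw [List.getElem?_eq_getElem hrj, hf]⟩
        have hrj1 : j - 1 < r.length := by omega
        rw [List.getElem?_eq_getElem hrj1]
        cases hb : r[j-1] with
        | false =>
          exfalso
          apply hrDD
          rw [infixDD_iff]
          exact ⟨j - 1, by rw [List.getElem?_eq_getElem hrj1, hb],
            by rw [hjj, List.getElem?_eq_getElem hrj, hf]⟩
        | true => rfl
      · rintro ⟨hj1, hocc⟩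
        rw [occUD_iff] at hocc
        have hjj : j - 1 + 1 = j := by omega
        rw [hjj] at hocc
        have := hocc.2
        rw [List.getElem?_eq_getElem hrj] at this
        exact Option.some.inj this
    -- characterize q[j] = false
    have hqchar : q[j] = false ↔ (1 ≤ j ∧ OccursAt [true, false] r (j-1)) := by
      have : q[j]? = some q[j] := List.getElem?_eq_getElem hqj
      constructor
      · intro hf
        rw [hf] at this
        have c := (hqfalse j).mp this
        refine ⟨c.2.1, ?_⟩
        rw [← (hrE.2 (j-1)), occUD_iff]
        have hjj : j - 1 + 1 = j := by omega
        rw [hjj]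
        exact ⟨c.2.2.1, c.2.2.2⟩
      · rintro ⟨hj1, hocc⟩
        rw [← (hrE.2 (j-1)), occUD_iff] at hocc
        have hjj : j - 1 + 1 = j := by omega
        rw [hjj] at hocc
        have hqf : q[j]? = some false := (hqfalse j).mpr ⟨hj, hj1, hocc.1, hocc.2⟩
        rw [this] at hqf
        exact Option.some.inj hqf
    cases hb : r[j] with
    | false =>
      have := hqchar.mpr (hrchar.mp hb)
      rw [this]
    | true =>
      cases hb2 : q[j] with
      | false => exact absurd (hrchar.mpr (hqchar.mp hb2)) (by rw [hb]; simp)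
      | true => rfl
  · rw [List.getElem?_eq_none (by omega), List.getElem?_eq_none (by omega)]
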